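/- Let f : ℝ → ℝ be C¹ and T-periodic, let g > 0, and suppose f belongs to the class 𝒞. Then in the restricted bouncing-ball system, case (1), there exist initial conditions for which both balls P₁ and P₂ have unbounded velocity. -/

import Mathlib

open Filter Topology

namespace BB

open Filter Topology Set

structure Dat where
  g : ℝ
  P : ℝ
  γ : ℝ
  f₀ : ℝ
  N : ℕ

set_option linter.unusedSectionVars false
namespace Dat

variable (D : Dat)

/-- plate collision times -/
noncomputable def c (n : ℕ) : ℝ := D.γ + ((n : ℝ) + 2 * D.N) * n * D.P

/-- ball-ball collision times -/
noncomputable def q (n : ℕ) : ℝ := D.c n + ((D.N : ℝ) + n - 1/2) * D.P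

/-- left root of the pre-flight parabola -/
noncomputable def apre : ℝ := D.γ - (2 * (D.N : ℝ) - 1) * D.P

noncomputable def parab (a b t : ℝ) : ℝ := D.f₀ + D.g / 2 * (t - a) * (b - t)

noncomputable def w (a b t : ℝ) : ℝ := D.g / 2 * (a + b) - D.g * t

noncomputable def A (k : ℕ) : ℝ := D.f₀ + D.g * D.P ^ 2 / 4 * (4 * ((D.N : ℝ) + k) ^ 2 - 1)

noncomputable def pp (k : ℕ) (t : ℝ) : ℝ := D.A k - D.g / 2 * (t - D.c k) ^ 2

noncomputable def idx (t : ℝ) : ℕ := sInf {n : ℕ | t < D.c (n + 1)}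

noncomputable def jdx (t : ℝ) : ℕ := sInf {n : ℕ | t < D.q (n + 1)}

noncomputable def kk (t : ℝ) : ℕ := if t < D.q 0 then 0 else D.jdx t + 1

noncomputable def X₂ (t : ℝ) : ℝ :=
  if t < D.c 0 then D.parab D.apre (D.c 0) t
  else D.parab (D.c (D.idx t)) (D.c (D.idx t + 1)) t

noncomputable def V₂ (t : ℝ) : ℝ :=
  if t < D.c 0 then D.w D.apre (D.c 0) t
  else D.w (D.c (D.idx t)) (D.c (D.idx t + 1)) t

noncomputable def X₁ (t : ℝ) : ℝ := D.pp (D.kk t) t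

noncomputable def V₁ (t : ℝ) : ℝ := -D.g * (t - D.c (D.kk t))

/-- sanity hypotheses -/
structure Sane (D : Dat) : Prop where
  hg : 0 < D.g
  hP : 0 < D.P
  hγ1 : D.P ≤ D.γ
  hγ2 : D.γ < 2 * D.P
  hN : 4 ≤ D.N

variable {D}

section Arith

variable (hS : D.Sane)
include hS

omit hS in
lemma c_zero : D.c 0 = D.γ := by simp [Dat.c]

lemma hNR : (4 : ℝ) ≤ (D.N : ℝ) := by exact_mod_cast hS.hN

lemma c_succ (n : ℕ) : D.c (n + 1) = D.c n + (2 * ((D.N : ℝ) + n) + 1) * D.P := by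
  simp only [Dat.c]; push_cast; ring

lemma c_lt_succ (n : ℕ) : D.c n < D.c (n + 1) := by
  rw [c_succ hS]
  have h4 := hNR hS
  have : (0:ℝ) < (2 * ((D.N : ℝ) + n) + 1) * D.P := by
    have : (0:ℝ) ≤ (n:ℝ) := Nat.cast_nonneg n
    nlinarith [hS.hP]
  linarith

lemma c_mono : StrictMono D.c := strictMono_nat_of_lt_succ (c_lt_succ hS)

lemma c_le_of_le {m n : ℕ} (h : m ≤ n) : D.c m ≤ D.c n := (c_mono hS).monotone h

lemma lin_le_c (n : ℕ) : D.γ + n * D.P ≤ D.c n := by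
  have h4 := hNR hS
  have hn : (0:ℝ) ≤ (n:ℝ) := Nat.cast_nonneg n
  simp only [Dat.c]
  nlinarith [hS.hP, mul_nonneg (mul_nonneg hn (by linarith : (0:ℝ) ≤ (n:ℝ) + 2*D.N - 1)) hS.hP.le]

lemma c_tendsto : Tendsto D.c atTop atTop := by
  apply tendsto_atTop_mono (lin_le_c hS)
  apply tendsto_atTop_add_const_left
  exact Tendsto.atTop_mul_const hS.hP tendsto_natCast_atTop_atTop

lemma c_pos (n : ℕ) : 0 < D.c n := by
  have := lin_le_c hS n
  have hn : (0:ℝ) ≤ (n:ℝ) := Nat.cast_nonneg n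
  nlinarith [hS.hP, hS.hγ1]

lemma c_lt_q (n : ℕ) : D.c n < D.q n := by
  have h4 := hNR hS
  have hn : (0:ℝ) ≤ (n:ℝ) := Nat.cast_nonneg n
  simp only [Dat.q]
  nlinarith [hS.hP]

lemma q_lt_c_succ (n : ℕ) : D.q n < D.c (n + 1) := by
  rw [c_succ hS]
  have h4 := hNR hS
  have hn : (0:ℝ) ≤ (n:ℝ) := Nat.cast_nonneg n
  simp only [Dat.q]
  nlinarith [hS.hP]

lemma q_mono : StrictMono D.q :=
  strictMono_nat_of_lt_succ fun n => (q_lt_c_succ hS n).trans (c_lt_q hS (n + 1))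

lemma q_pos (n : ℕ) : 0 < D.q n := (c_pos hS n).trans (c_lt_q hS n)

lemma q_tendsto : Tendsto D.q atTop atTop :=
  tendsto_atTop_mono (fun n => (c_lt_q hS n).le) (c_tendsto hS)

end Arith

section Idx

variable (hS : D.Sane)
include hS

lemma idx_set_nonempty (t : ℝ) : {n : ℕ | t < D.c (n + 1)}.Nonempty := by
  obtain ⟨n, hn⟩ := ((c_tendsto hS).eventually_gt_atTop t).exists
  exact ⟨n, lt_of_lt_of_le hn (c_le_of_le hS (Nat.le_succ n))⟩

lemma lt_c_idx_succ (t : ℝ) : t < D.c (D.idx t + 1) :=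
  Nat.sInf_mem (idx_set_nonempty hS t)

lemma c_idx_le {t : ℝ} (h : D.c 0 ≤ t) : D.c (D.idx t) ≤ t := by
  cases h' : D.idx t with
  | zero => exact h
  | succ m =>
    have hm : m ∉ {n : ℕ | t < D.c (n + 1)} :=
      Nat.notMem_of_lt_sInf (show m < D.idx t by omega)
    simpa using not_lt.1 hm

lemma idx_eq {t : ℝ} {n : ℕ} (h1 : D.c n ≤ t) (h2 : t < D.c (n + 1)) : D.idx t = n := by
  refine le_antisymm (Nat.sInf_le h2) ?_
  refine le_of_not_gt fun hlt => ?_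
  have := Nat.sInf_mem (idx_set_nonempty hS t)
  have hle : D.c (D.idx t + 1) ≤ D.c n := c_le_of_le hS (by omega)
  exact absurd (this.trans_le (hle.trans h1)) (lt_irrefl t)

lemma jdx_set_nonempty (t : ℝ) : {n : ℕ | t < D.q (n + 1)}.Nonempty := by
  obtain ⟨n, hn⟩ := ((q_tendsto hS).eventually_gt_atTop t).exists
  exact ⟨n, lt_of_lt_of_le hn ((q_mono hS).monotone (Nat.le_succ n))⟩

lemma lt_q_jdx_succ (t : ℝ) : t < D.q (D.jdx t + 1) :=
  Nat.sInf_mem (jdx_set_nonempty hS t)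

lemma q_jdx_le {t : ℝ} (h : D.q 0 ≤ t) : D.q (D.jdx t) ≤ t := by
  cases h' : D.jdx t with
  | zero => exact h
  | succ m =>
    have hm : m ∉ {n : ℕ | t < D.q (n + 1)} :=
      Nat.notMem_of_lt_sInf (show m < D.jdx t by omega)
    simpa using not_lt.1 hm

lemma jdx_eq {t : ℝ} {n : ℕ} (h1 : D.q n ≤ t) (h2 : t < D.q (n + 1)) : D.jdx t = n := by
  refine le_antisymm (Nat.sInf_le h2) ?_
  refine le_of_not_gt fun hlt => ?_
  have := Nat.sInf_mem (jdx_set_nonempty hS t)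
  have hle : D.q (D.jdx t + 1) ≤ D.q n := (q_mono hS).monotone (by omega)
  exact absurd (this.trans_le (hle.trans h1)) (lt_irrefl t)

end Idx

section Pieces

variable (hS : D.Sane)
include hS

omit hS in
lemma X₂_pre {t : ℝ} (h : t < D.c 0) : D.X₂ t = D.parab D.apre (D.c 0) t := if_pos h

omit hS in
lemma V₂_pre {t : ℝ} (h : t < D.c 0) : D.V₂ t = D.w D.apre (D.c 0) t := if_pos h

lemma X₂_piece {t : ℝ} {n : ℕ} (h1 : D.c n ≤ t) (h2 : t < D.c (n + 1)) :
    D.X₂ t = D.parab (D.c n) (D.c (n + 1)) t := by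
  have h0 : D.c 0 ≤ t := (c_le_of_le hS (Nat.zero_le n)).trans h1
  rw [Dat.X₂, if_neg (not_lt.2 h0), idx_eq hS h1 h2]

lemma V₂_piece {t : ℝ} {n : ℕ} (h1 : D.c n ≤ t) (h2 : t < D.c (n + 1)) :
    D.V₂ t = D.w (D.c n) (D.c (n + 1)) t := by
  have h0 : D.c 0 ≤ t := (c_le_of_le hS (Nat.zero_le n)).trans h1
  rw [Dat.V₂, if_neg (not_lt.2 h0), idx_eq hS h1 h2]

omit hS in
lemma kk_pre {t : ℝ} (h : t < D.q 0) : D.kk t = 0 := if_pos h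

lemma kk_piece {t : ℝ} {n : ℕ} (h1 : D.q n ≤ t) (h2 : t < D.q (n + 1)) : D.kk t = n + 1 := by
  have h0 : D.q 0 ≤ t := ((q_mono hS).monotone (Nat.zero_le n)).trans h1
  rw [Dat.kk, if_neg (not_lt.2 h0), jdx_eq hS h1 h2]

omit hS in
lemma X₁_pre {t : ℝ} (h : t < D.q 0) : D.X₁ t = D.pp 0 t := by
  rw [Dat.X₁, kk_pre h]

omit hS in
lemma V₁_pre {t : ℝ} (h : t < D.q 0) : D.V₁ t = -D.g * (t - D.c 0) := by
  rw [Dat.V₁, kk_pre h]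

lemma X₁_piece {t : ℝ} {n : ℕ} (h1 : D.q n ≤ t) (h2 : t < D.q (n + 1)) :
    D.X₁ t = D.pp (n + 1) t := by
  rw [Dat.X₁, kk_piece hS h1 h2]

lemma V₁_piece {t : ℝ} {n : ℕ} (h1 : D.q n ≤ t) (h2 : t < D.q (n + 1)) :
    D.V₁ t = -D.g * (t - D.c (n + 1)) := by
  rw [Dat.V₁, kk_piece hS h1 h2]

omit hS in
lemma parab_left (a b : ℝ) : D.parab a b a = D.f₀ := by simp [Dat.parab]

omit hS in
lemma parab_right (a b : ℝ) : D.parab a b b = D.f₀ := by simp [Dat.parab]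

lemma X₂_at_c (n : ℕ) : D.X₂ (D.c n) = D.f₀ := by
  rw [X₂_piece hS le_rfl (c_lt_succ hS n), parab_left]

end Pieces

section Deriv

variable (D)

lemma hasDerivAt_parab (a b t : ℝ) : HasDerivAt (D.parab a b) (D.w a b t) t := by
  have h : HasDerivAt (fun s : ℝ => D.f₀ + D.g / 2 * (s - a) * (b - s))
      (D.g / 2 * 1 * (b - t) + D.g / 2 * (t - a) * (0 - 1)) t := by
    exact ((((hasDerivAt_id t).sub_const a).const_mul (D.g / 2)).mul
      ((hasDerivAt_const t b).sub (hasDerivAt_id t))).const_add D.f₀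
  convert h using 1
  · rfl
  simp [Dat.w]; ring

lemma continuous_parab (a b : ℝ) : Continuous (D.parab a b) := by
  unfold Dat.parab; fun_prop

lemma hasDerivAt_w (a b t : ℝ) : HasDerivAt (D.w a b) (-D.g) t := by
  have h : HasDerivAt (fun s : ℝ => D.g / 2 * (a + b) - D.g * s) (-(D.g * 1)) t :=
    (((hasDerivAt_id t).const_mul D.g)).const_sub (D.g / 2 * (a + b))
  convert h using 1
  · rfl
  ring

lemma continuous_w (a b : ℝ) : Continuous (D.w a b) := by
  unfold Dat.w; fun_prop

lemma hasDerivAt_pp (k : ℕ) (t : ℝ) : HasDerivAt (D.pp k) (-D.g * (t - D.c k)) t := by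
  have h : HasDerivAt (fun s : ℝ => D.A k - D.g / 2 * (s - D.c k) ^ 2)
      (-(D.g / 2 * ((2 : ℕ) * (t - D.c k) ^ 1 * 1))) t := by
    have h1 : HasDerivAt (fun s : ℝ => (s - D.c k) ^ 2) ((2 : ℕ) * (t - D.c k) ^ 1 * 1) t :=
      ((hasDerivAt_id t).sub_const (D.c k)).pow 2
    exact (h1.const_mul (D.g / 2)).const_sub (D.A k)
  convert h using 1
  · rfl
  push_cast
  ring

lemma continuous_pp (k : ℕ) : Continuous (D.pp k) := by
  unfold Dat.pp; fun_prop

lemma hasDerivAt_vpp (k : ℕ) (t : ℝ) : HasDerivAt (fun s => -D.g * (s - D.c k)) (-D.g) t := by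
  have h : HasDerivAt (fun s : ℝ => -D.g * (s - D.c k)) (-D.g * 1) t :=
    ((hasDerivAt_id t).sub_const (D.c k)).const_mul (-D.g)
  simpa using h

lemma continuous_vpp (k : ℕ) : Continuous (fun s => -D.g * (s - D.c k)) := by fun_prop

end Deriv

section LocalEq

variable (hS : D.Sane)
include hS

omit hS in
lemma X₂_eqOn_pre {t : ℝ} (h : t < D.c 0) :
    D.X₂ =ᶠ[nhds t] D.parab D.apre (D.c 0) := by
  filter_upwards [Iio_mem_nhds h] with s hs using X₂_pre hs

omit hS in
lemma V₂_eqOn_pre {t : ℝ} (h : t < D.c 0) :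
    D.V₂ =ᶠ[nhds t] D.w D.apre (D.c 0) := by
  filter_upwards [Iio_mem_nhds h] with s hs using V₂_pre hs

lemma X₂_eqOn_piece {t : ℝ} {n : ℕ} (h1 : D.c n < t) (h2 : t < D.c (n + 1)) :
    D.X₂ =ᶠ[nhds t] D.parab (D.c n) (D.c (n + 1)) := by
  filter_upwards [Ioo_mem_nhds h1 h2] with s hs using X₂_piece hS hs.1.le hs.2

lemma V₂_eqOn_piece {t : ℝ} {n : ℕ} (h1 : D.c n < t) (h2 : t < D.c (n + 1)) :
    D.V₂ =ᶠ[nhds t] D.w (D.c n) (D.c (n + 1)) := by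
  filter_upwards [Ioo_mem_nhds h1 h2] with s hs using V₂_piece hS hs.1.le hs.2

omit hS in
lemma X₁_eqOn_pre {t : ℝ} (h : t < D.q 0) : D.X₁ =ᶠ[nhds t] D.pp 0 := by
  filter_upwards [Iio_mem_nhds h] with s hs using X₁_pre hs

omit hS in
lemma V₁_eqOn_pre {t : ℝ} (h : t < D.q 0) :
    D.V₁ =ᶠ[nhds t] fun s => -D.g * (s - D.c 0) := by
  filter_upwards [Iio_mem_nhds h] with s hs using V₁_pre hs

lemma X₁_eqOn_piece {t : ℝ} {n : ℕ} (h1 : D.q n < t) (h2 : t < D.q (n + 1)) :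
    D.X₁ =ᶠ[nhds t] D.pp (n + 1) := by
  filter_upwards [Ioo_mem_nhds h1 h2] with s hs using X₁_piece hS hs.1.le hs.2

lemma V₁_eqOn_piece {t : ℝ} {n : ℕ} (h1 : D.q n < t) (h2 : t < D.q (n + 1)) :
    D.V₁ =ᶠ[nhds t] fun s => -D.g * (s - D.c (n + 1)) := by
  filter_upwards [Ioo_mem_nhds h1 h2] with s hs using V₁_piece hS hs.1.le hs.2

end LocalEq

section Glue

lemma continuousAt_glue {x F G : ℝ → ℝ} {b : ℝ} (hF : Continuous F) (hG : Continuous G)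
    (hl : ∀ᶠ s in nhdsWithin b (Iio b), x s = F s)
    (hr : ∀ᶠ s in nhdsWithin b (Ici b), x s = G s)
    (hxb : x b = G b) (hFG : F b = G b) : ContinuousAt x b := by
  rw [ContinuousAt, ← nhdsLT_sup_nhdsGE b, tendsto_sup]
  constructor
  · refine Tendsto.congr' (by filter_upwards [hl] with s hs using hs.symm) ?_
    rw [hxb, ← hFG]
    exact (hF.tendsto b).mono_left nhdsWithin_le_nhds
  · refine Tendsto.congr' (by filter_upwards [hr] with s hs using hs.symm) ?_
    rw [hxb]
    exact (hG.tendsto b).mono_left nhdsWithin_le_nhds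

end Glue

section Cont

variable (hS : D.Sane)
include hS

lemma X₂_continuousAt (t : ℝ) : ContinuousAt D.X₂ t := by
  rcases lt_or_ge t (D.c 0) with h | h
  · exact (continuous_parab D D.apre (D.c 0)).continuousAt.congr (X₂_eqOn_pre h).symm
  · rcases eq_or_lt_of_le (c_idx_le hS h) with he | hlt
    · obtain ⟨n, rfl⟩ : ∃ n, t = D.c n := ⟨D.idx t, he.symm⟩
      rcases Nat.eq_zero_or_pos n with h0 | hpos
      · subst h0
        refine continuousAt_glue (continuous_parab D D.apre (D.c 0))
          (continuous_parab D (D.c 0) (D.c 1)) ?_ ?_ ?_ ?_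
        · filter_upwards [self_mem_nhdsWithin] with s hs using X₂_pre hs
        · have hmem : Ico (D.c 0) (D.c 1) ∈ nhdsWithin (D.c 0) (Ici (D.c 0)) :=
            Ico_mem_nhdsGE (c_lt_succ hS 0)
          filter_upwards [hmem] with s hs using X₂_piece hS hs.1 hs.2
        · rw [X₂_piece hS le_rfl (c_lt_succ hS 0)]
        · rw [parab_right, parab_left]
      · obtain ⟨m, rfl⟩ : ∃ m, n = m + 1 := ⟨n - 1, by omega⟩
        refine continuousAt_glue (continuous_parab D (D.c m) (D.c (m + 1)))
          (continuous_parab D (D.c (m + 1)) (D.c (m + 2))) ?_ ?_ ?_ ?_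
        · have hmem : Ioo (D.c m) (D.c (m + 1)) ∈ nhdsWithin (D.c (m + 1)) (Iio (D.c (m + 1))) :=
            Ioo_mem_nhdsLT_of_mem ⟨c_lt_succ hS m, le_rfl⟩
          filter_upwards [hmem] with s hs using X₂_piece hS hs.1.le hs.2
        · have hmem : Ico (D.c (m + 1)) (D.c (m + 2)) ∈
              nhdsWithin (D.c (m + 1)) (Ici (D.c (m + 1))) :=
            Ico_mem_nhdsGE (c_lt_succ hS (m + 1))
          filter_upwards [hmem] with s hs using X₂_piece hS hs.1 hs.2
        · rw [X₂_piece hS le_rfl (c_lt_succ hS (m + 1))]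
        · rw [parab_right, parab_left]
    · exact (continuous_parab D (D.c (D.idx t)) (D.c (D.idx t + 1))).continuousAt.congr
        (X₂_eqOn_piece hS hlt (lt_c_idx_succ hS t)).symm

lemma pp_at_q (n : ℕ) : D.pp n (D.q n) = D.pp (n + 1) (D.q n) := by
  simp only [Dat.pp, Dat.A, Dat.c, Dat.q]
  push_cast
  ring

lemma X₁_continuousAt (t : ℝ) : ContinuousAt D.X₁ t := by
  rcases lt_or_ge t (D.q 0) with h | h
  · exact (continuous_pp D 0).continuousAt.congr (X₁_eqOn_pre h).symm
  · rcases eq_or_lt_of_le (q_jdx_le hS h) with he | hlt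
    · obtain ⟨n, rfl⟩ : ∃ n, t = D.q n := ⟨D.jdx t, he.symm⟩
      rcases Nat.eq_zero_or_pos n with h0 | hpos
      · subst h0
        refine continuousAt_glue (continuous_pp D 0) (continuous_pp D 1) ?_ ?_ ?_ ?_
        · filter_upwards [self_mem_nhdsWithin] with s hs using X₁_pre hs
        · have hmem : Ico (D.q 0) (D.q 1) ∈ nhdsWithin (D.q 0) (Ici (D.q 0)) :=
            Ico_mem_nhdsGE (q_mono hS (Nat.lt_succ_self 0))
          filter_upwards [hmem] with s hs using X₁_piece hS hs.1 hs.2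
        · rw [X₁_piece hS le_rfl (q_mono hS (Nat.lt_succ_self 0))]
        · exact pp_at_q hS 0
      · obtain ⟨m, rfl⟩ : ∃ m, n = m + 1 := ⟨n - 1, by omega⟩
        refine continuousAt_glue (continuous_pp D (m + 1)) (continuous_pp D (m + 2)) ?_ ?_ ?_ ?_
        · have hmem : Ioo (D.q m) (D.q (m + 1)) ∈ nhdsWithin (D.q (m + 1)) (Iio (D.q (m + 1))) :=
            Ioo_mem_nhdsLT_of_mem ⟨q_mono hS (Nat.lt_succ_self m), le_rfl⟩
          filter_upwards [hmem] with s hs using X₁_piece hS hs.1.le hs.2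
        · have hmem : Ico (D.q (m + 1)) (D.q (m + 2)) ∈
              nhdsWithin (D.q (m + 1)) (Ici (D.q (m + 1))) :=
            Ico_mem_nhdsGE (q_mono hS (Nat.lt_succ_self (m + 1)))
          filter_upwards [hmem] with s hs using X₁_piece hS hs.1 hs.2
        · rw [X₁_piece hS le_rfl (q_mono hS (Nat.lt_succ_self (m + 1)))]
        · exact pp_at_q hS (m + 1)
    · exact (continuous_pp D (D.jdx t + 1)).continuousAt.congr
        (X₁_eqOn_piece hS hlt (lt_q_jdx_succ hS t)).symm

end Cont

section Identities

variable (D)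

lemma d_left (n : ℕ) (t : ℝ) : D.pp n t - D.parab (D.c n) (D.c (n + 1)) t
    = D.g * (2 * ((D.N : ℝ) + n) + 1) * D.P / 2 * (D.q n - t) := by
  simp only [Dat.pp, Dat.A, Dat.c, Dat.q, Dat.parab]
  push_cast
  ring

lemma d_right (n : ℕ) (t : ℝ) : D.pp (n + 1) t - D.parab (D.c n) (D.c (n + 1)) t
    = D.g * (2 * ((D.N : ℝ) + n) + 1) * D.P / 2 * (t - D.q n) := by
  simp only [Dat.pp, Dat.A, Dat.c, Dat.q, Dat.parab]
  push_cast
  ring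

lemma d_pre (t : ℝ) : D.pp 0 t - D.parab D.apre (D.c 0) t
    = D.g * (2 * (D.N : ℝ) - 1) * D.P / 2 * ((2 * (D.N : ℝ) + 1) * D.P / 2 - (D.c 0 - t)) := by
  simp only [Dat.pp, Dat.A, Dat.c, Dat.apre, Dat.parab]
  push_cast
  ring

lemma plate_id_zero : D.w (D.c 0) (D.c 1) (D.c 0)
    = -(D.w D.apre (D.c 0) (D.c 0)) + 2 * (D.g * D.P / 2) := by
  simp only [Dat.w, Dat.c, Dat.apre]
  push_cast
  ring

lemma plate_id_succ (m : ℕ) : D.w (D.c (m + 1)) (D.c (m + 2)) (D.c (m + 1))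
    = -(D.w (D.c m) (D.c (m + 1)) (D.c (m + 1))) + 2 * (D.g * D.P / 2) := by
  simp only [Dat.w, Dat.c]
  push_cast
  ring

lemma ball_id (n : ℕ) : -D.g * (D.q n - D.c (n + 1))
    = -(-D.g * (D.q n - D.c n)) + 2 * D.w (D.c n) (D.c (n + 1)) (D.q n) := by
  simp only [Dat.w, Dat.c, Dat.q]
  push_cast
  ring

end Identities

section Vals

variable (hS : D.Sane)
include hS

lemma V₂_at_c (n : ℕ) : D.V₂ (D.c n) = D.g * (2 * ((D.N : ℝ) + n) + 1) * D.P / 2 := by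
  rw [V₂_piece hS le_rfl (c_lt_succ hS n)]
  simp only [Dat.w, Dat.c]
  push_cast
  ring

lemma V₁_at_q (n : ℕ) : D.V₁ (D.q n) = D.g * (((D.N : ℝ) + n) + 3/2) * D.P := by
  rw [V₁_piece hS le_rfl (q_mono hS (Nat.lt_succ_self n))]
  simp only [Dat.c, Dat.q]
  push_cast
  ring

end Vals

section Gap

variable (hS : D.Sane)
include hS

lemma c_gap {j k : ℕ} (h : j < k) : D.c j + (2 * (D.N : ℝ) + 1) * D.P ≤ D.c k := by
  have h1 : D.c (j + 1) ≤ D.c k := c_le_of_le hS h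
  rw [c_succ hS] at h1
  have hj : (0:ℝ) ≤ (j:ℝ) := Nat.cast_nonneg j
  nlinarith [hS.hP]

lemma discrete (t : ℝ) : ∃ ε > (0:ℝ), ∀ s ∈ range D.c, |s - t| < ε → s = t := by
  have hτ : (0:ℝ) < (2 * (D.N : ℝ) + 1) * D.P := by
    have := hNR hS
    nlinarith [hS.hP]
  rcases lt_or_ge t (D.c 0) with h | h
  · refine ⟨D.c 0 - t, by linarith, ?_⟩
    rintro s ⟨k, rfl⟩ habs
    have : D.c 0 ≤ D.c k := c_le_of_le hS (Nat.zero_le k)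
    rw [abs_lt] at habs
    linarith [habs.2]
  · rcases eq_or_lt_of_le (c_idx_le hS h) with he | hlt
    · refine ⟨(2 * (D.N : ℝ) + 1) * D.P, hτ, ?_⟩
      rintro s ⟨k, rfl⟩ habs
      rcases lt_trichotomy k (D.idx t) with hk | hk | hk
      · have := c_gap hS hk
        rw [abs_lt] at habs
        linarith [habs.1]
      · rw [hk, he]
      · have := c_gap hS hk
        rw [abs_lt] at habs
        linarith [habs.2]
    · refine ⟨min (t - D.c (D.idx t)) (D.c (D.idx t + 1) - t), by
        simp only [lt_min_iff]
        exact ⟨by linarith, by linarith [lt_c_idx_succ hS t]⟩, ?_⟩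
      rintro s ⟨k, rfl⟩ habs
      rw [abs_lt] at habs
      have h1 : -(t - D.c (D.idx t)) < D.c k - t :=
        lt_of_le_of_lt (neg_le_neg (min_le_left _ _)) habs.1
      have h2 : D.c k - t < D.c (D.idx t + 1) - t :=
        lt_of_lt_of_le habs.2 (min_le_right _ _)
      rcases le_or_gt k (D.idx t) with hk | hk
      · have : D.c k ≤ D.c (D.idx t) := c_le_of_le hS hk
        linarith
      · have : D.c (D.idx t + 1) ≤ D.c k := c_le_of_le hS hk
        linarith
end Gap

section Freefall

variable (hS : D.Sane)
include hS

lemma freefall₂ {t : ℝ} (ht : t ∉ range D.c) :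
    HasDerivAt D.X₂ (D.V₂ t) t ∧ HasDerivAt D.V₂ (-D.g) t := by
  rcases lt_or_ge t (D.c 0) with h | h
  · rw [V₂_pre h]
    exact ⟨(hasDerivAt_parab D _ _ t).congr_of_eventuallyEq (X₂_eqOn_pre h),
      (hasDerivAt_w D _ _ t).congr_of_eventuallyEq (V₂_eqOn_pre h)⟩
  · have h1 : D.c (D.idx t) < t :=
      lt_of_le_of_ne (c_idx_le hS h) fun hc => ht ⟨D.idx t, hc⟩
    have h2 : t < D.c (D.idx t + 1) := lt_c_idx_succ hS t
    rw [V₂_piece hS h1.le h2]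
    exact ⟨(hasDerivAt_parab D _ _ t).congr_of_eventuallyEq (X₂_eqOn_piece hS h1 h2),
      (hasDerivAt_w D _ _ t).congr_of_eventuallyEq (V₂_eqOn_piece hS h1 h2)⟩

lemma freefall₁ {t : ℝ} (ht : ∀ n, D.q n ≠ t) :
    HasDerivAt D.X₁ (D.V₁ t) t ∧ HasDerivAt D.V₁ (-D.g) t := by
  rcases lt_or_ge t (D.q 0) with h | h
  · rw [V₁_pre h]
    exact ⟨(hasDerivAt_pp D 0 t).congr_of_eventuallyEq (X₁_eqOn_pre h),
      (hasDerivAt_vpp D 0 t).congr_of_eventuallyEq (V₁_eqOn_pre h)⟩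
  · have h1 : D.q (D.jdx t) < t :=
      lt_of_le_of_ne (q_jdx_le hS h) (ht (D.jdx t))
    have h2 : t < D.q (D.jdx t + 1) := lt_q_jdx_succ hS t
    rw [V₁_piece hS h1.le h2]
    exact ⟨(hasDerivAt_pp D _ t).congr_of_eventuallyEq (X₁_eqOn_piece hS h1 h2),
      (hasDerivAt_vpp D _ t).congr_of_eventuallyEq (V₁_eqOn_piece hS h1 h2)⟩

end Freefall

section Limits

variable (hS : D.Sane)
include hS

omit hS in
lemma V₂_left_zero : Tendsto D.V₂ (nhdsWithin (D.c 0) (Iio (D.c 0)))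
    (nhds (D.w D.apre (D.c 0) (D.c 0))) := by
  refine Tendsto.congr' ?_ (((continuous_w D _ _).tendsto _).mono_left nhdsWithin_le_nhds)
  filter_upwards [self_mem_nhdsWithin] with s hs using (V₂_pre hs).symm

lemma V₂_left_succ (m : ℕ) : Tendsto D.V₂ (nhdsWithin (D.c (m + 1)) (Iio (D.c (m + 1))))
    (nhds (D.w (D.c m) (D.c (m + 1)) (D.c (m + 1)))) := by
  refine Tendsto.congr' ?_ (((continuous_w D _ _).tendsto _).mono_left nhdsWithin_le_nhds)
  filter_upwards [Ioo_mem_nhdsLT_of_mem ⟨c_lt_succ hS m, le_rfl⟩] with s hs using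
    (V₂_piece hS hs.1.le hs.2).symm

lemma V₂_right (m : ℕ) : Tendsto D.V₂ (nhdsWithin (D.c m) (Ioi (D.c m)))
    (nhds (D.w (D.c m) (D.c (m + 1)) (D.c m))) := by
  refine Tendsto.congr' ?_ (((continuous_w D _ _).tendsto _).mono_left nhdsWithin_le_nhds)
  filter_upwards [Ioo_mem_nhdsGT_of_mem ⟨le_rfl, c_lt_succ hS m⟩] with s hs using
    (V₂_piece hS hs.1.le hs.2).symm

lemma V₁_left (n : ℕ) : Tendsto D.V₁ (nhdsWithin (D.q n) (Iio (D.q n)))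
    (nhds (-D.g * (D.q n - D.c n))) := by
  cases n with
  | zero =>
    refine Tendsto.congr' ?_ (((continuous_vpp D 0).tendsto _).mono_left nhdsWithin_le_nhds)
    filter_upwards [self_mem_nhdsWithin] with s hs using (V₁_pre hs).symm
  | succ m =>
    refine Tendsto.congr' ?_
      (((continuous_vpp D (m + 1)).tendsto _).mono_left nhdsWithin_le_nhds)
    filter_upwards [Ioo_mem_nhdsLT_of_mem ⟨q_mono hS (Nat.lt_succ_self m), le_rfl⟩] with s hs
      using (V₁_piece hS hs.1.le hs.2).symm

lemma V₁_right (n : ℕ) : Tendsto D.V₁ (nhdsWithin (D.q n) (Ioi (D.q n)))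
    (nhds (-D.g * (D.q n - D.c (n + 1)))) := by
  refine Tendsto.congr' ?_
    (((continuous_vpp D (n + 1)).tendsto _).mono_left nhdsWithin_le_nhds)
  filter_upwards [Ioo_mem_nhdsGT_of_mem ⟨le_rfl, q_mono hS (Nat.lt_succ_self n)⟩] with s hs
    using (V₁_piece hS hs.1.le hs.2).symm

end Limits

section Order

variable (hS : D.Sane) (f : ℝ → ℝ) (L : ℝ)
variable (hL0 : 0 ≤ L) (hLip : ∀ x y : ℝ, |f x - f y| ≤ L * |x - y|)
variable (hLN : L < D.g * D.P * (2 * (D.N : ℝ) - 3) / 4)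
variable (hfc : ∀ n : ℕ, f (D.c n) = D.f₀)
include hS hL0 hLip hLN hfc

lemma order_pre {t : ℝ} (h0 : 0 ≤ t) (h : t < D.c 0) : f t < D.parab D.apre (D.c 0) t := by
  have h4 := hNR hS
  have hg := hS.hg
  have hP := hS.hP
  have hc0 : D.c 0 = D.γ := c_zero
  have habs : |t - D.c 0| = D.c 0 - t := by
    rw [abs_of_nonpos (by linarith)]; ring
  have h1 : f t - D.f₀ ≤ L * (D.c 0 - t) := by
    calc f t - D.f₀ = f t - f (D.c 0) := by rw [hfc 0]
      _ ≤ |f t - f (D.c 0)| := le_abs_self _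
      _ ≤ L * |t - D.c 0| := hLip t (D.c 0)
      _ = L * (D.c 0 - t) := by rw [habs]
  have h2 : (2 * (D.N : ℝ) - 3) * D.P ≤ t - D.apre := by
    simp only [Dat.apre]
    have := hS.hγ2
    nlinarith
  have hpos : 0 < D.c 0 - t := by linarith
  have key : D.g / 2 * ((2 * (D.N : ℝ) - 3) * D.P) * (D.c 0 - t)
      ≤ D.g / 2 * (t - D.apre) * (D.c 0 - t) := by
    apply mul_le_mul_of_nonneg_right _ hpos.le
    apply mul_le_mul_of_nonneg_left h2 (by linarith)
  have key2 : L * (D.c 0 - t) < D.g / 2 * ((2 * (D.N : ℝ) - 3) * D.P) * (D.c 0 - t) := by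
    apply mul_lt_mul_of_pos_right _ hpos
    nlinarith
  simp only [Dat.parab]
  nlinarith [key, key2, h1]

lemma order_piece {t : ℝ} {n : ℕ} (h1 : D.c n < t) (h2 : t < D.c (n + 1)) :
    f t < D.parab (D.c n) (D.c (n + 1)) t := by
  have h4 := hNR hS
  have hg := hS.hg
  have hP := hS.hP
  have hnn : (0:ℝ) ≤ (n:ℝ) := Nat.cast_nonneg n
  have hcs : D.c (n + 1) = D.c n + (2 * ((D.N : ℝ) + n) + 1) * D.P := c_succ hS n
  have hA : f t - D.f₀ ≤ L * (t - D.c n) := by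
    calc f t - D.f₀ = f t - f (D.c n) := by rw [hfc n]
      _ ≤ |f t - f (D.c n)| := le_abs_self _
      _ ≤ L * |t - D.c n| := hLip t (D.c n)
      _ = L * (t - D.c n) := by rw [abs_of_pos (by linarith)]
  have hB : f t - D.f₀ ≤ L * (D.c (n + 1) - t) := by
    calc f t - D.f₀ = f t - f (D.c (n + 1)) := by rw [hfc (n + 1)]
      _ ≤ |f t - f (D.c (n + 1))| := le_abs_self _
      _ ≤ L * |t - D.c (n + 1)| := hLip t (D.c (n + 1))
      _ = L * (D.c (n + 1) - t) := by
          rw [abs_of_nonpos (by linarith)]; ring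
  have hLq : L < D.g * (2 * ((D.N : ℝ) + n) + 1) * D.P / 4 := by nlinarith
  simp only [Dat.parab]
  rcases le_or_gt (t - D.c n) (D.c (n + 1) - t) with hc | hc
  · have hmid : (2 * ((D.N : ℝ) + n) + 1) * D.P / 2 ≤ D.c (n + 1) - t := by
      nlinarith
    have key : D.g / 2 * (t - D.c n) * ((2 * ((D.N : ℝ) + n) + 1) * D.P / 2)
        ≤ D.g / 2 * (t - D.c n) * (D.c (n + 1) - t) := by
      apply mul_le_mul_of_nonneg_left hmid
      nlinarith
    have key2 : L * (t - D.c n)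
        < D.g / 2 * (t - D.c n) * ((2 * ((D.N : ℝ) + n) + 1) * D.P / 2) := by
      have ht : 0 < t - D.c n := by linarith
      nlinarith
    nlinarith [hA, key, key2]
  · have hmid : (2 * ((D.N : ℝ) + n) + 1) * D.P / 2 ≤ t - D.c n := by
      nlinarith
    have key : D.g / 2 * ((2 * ((D.N : ℝ) + n) + 1) * D.P / 2) * (D.c (n + 1) - t)
        ≤ D.g / 2 * (t - D.c n) * (D.c (n + 1) - t) := by
      apply mul_le_mul_of_nonneg_right _ (by linarith)
      apply mul_le_mul_of_nonneg_left hmid (by linarith)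
    have key2 : L * (D.c (n + 1) - t)
        < D.g / 2 * ((2 * ((D.N : ℝ) + n) + 1) * D.P / 2) * (D.c (n + 1) - t) := by
      have ht : 0 < D.c (n + 1) - t := by linarith
      nlinarith
    nlinarith [hB, key, key2]

lemma f_le_X₂ {t : ℝ} (h0 : 0 ≤ t) : f t ≤ D.X₂ t := by
  rcases lt_or_ge t (D.c 0) with h | h
  · rw [X₂_pre h]
    exact (order_pre hS f L hL0 hLip hLN hfc h0 h).le
  · rcases eq_or_lt_of_le (c_idx_le hS h) with he | hlt
    · rw [← he, X₂_at_c hS, hfc]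
    · rw [X₂_piece hS hlt.le (lt_c_idx_succ hS t)]
      exact (order_piece hS f L hL0 hLip hLN hfc hlt (lt_c_idx_succ hS t)).le

lemma X₂_touch {t : ℝ} (h0 : 0 ≤ t) (heq : D.X₂ t = f t) : t ∈ range D.c := by
  rcases lt_or_ge t (D.c 0) with h | h
  · exfalso
    rw [X₂_pre h] at heq
    exact absurd heq.symm (ne_of_lt (order_pre hS f L hL0 hLip hLN hfc h0 h))
  · rcases eq_or_lt_of_le (c_idx_le hS h) with he | hlt
    · exact ⟨D.idx t, he⟩
    · exfalso
      rw [X₂_piece hS hlt.le (lt_c_idx_succ hS t)] at heq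
      exact absurd heq.symm (ne_of_lt (order_piece hS f L hL0 hLip hLN hfc hlt
        (lt_c_idx_succ hS t)))

end Order

section DSign

variable (hS : D.Sane)
include hS

lemma coeff_pos (n : ℕ) : 0 < D.g * (2 * ((D.N : ℝ) + n) + 1) * D.P / 2 := by
  have h4 := hNR hS
  have hnn : (0:ℝ) ≤ (n:ℝ) := Nat.cast_nonneg n
  exact div_pos (mul_pos (mul_pos hS.hg (by linarith)) hS.hP) two_pos

lemma coeffp_pos : 0 < D.g * (2 * (D.N : ℝ) - 1) * D.P / 2 := by
  have h4 := hNR hS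
  exact div_pos (mul_pos (mul_pos hS.hg (by linarith)) hS.hP) two_pos

lemma inner_pre_pos {t : ℝ} (h0 : 0 ≤ t) :
    0 < (2 * (D.N : ℝ) + 1) * D.P / 2 - (D.c 0 - t) := by
  have h4 := hNR hS
  have hP := hS.hP
  have hγ : D.c 0 - t ≤ 2 * D.P := by
    rw [c_zero]; linarith [hS.hγ2]
  have h9 : (9:ℝ) * D.P ≤ (2 * (D.N : ℝ) + 1) * D.P := by
    nlinarith [mul_nonneg (show (0:ℝ) ≤ 2 * (D.N : ℝ) - 8 by linarith) hP.le]
  linarith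

lemma X₂_le_X₁ {t : ℝ} (h0 : 0 ≤ t) : D.X₂ t ≤ D.X₁ t := by
  rcases lt_or_ge t (D.q 0) with h | h
  · rw [X₁_pre h]
    rcases lt_or_ge t (D.c 0) with hc | hc
    · rw [X₂_pre hc]
      linarith [d_pre D t, mul_pos (coeffp_pos hS) (inner_pre_pos hS h0)]
    · have h2 : t < D.c 1 := h.trans (q_lt_c_succ hS 0)
      rw [X₂_piece hS hc h2]
      linarith [d_left D 0 t,
        mul_pos (coeff_pos hS 0) (show (0:ℝ) < D.q 0 - t by linarith)]
  · have h1 : D.q (D.jdx t) ≤ t := q_jdx_le hS h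
    have h2 : t < D.q (D.jdx t + 1) := lt_q_jdx_succ hS t
    set n := D.jdx t
    rw [X₁_piece hS h1 h2]
    rcases lt_or_ge t (D.c (n + 1)) with hc | hc
    · have hcn : D.c n ≤ t := (c_lt_q hS n).le.trans h1
      rw [X₂_piece hS hcn hc]
      linarith [d_right D n t,
        mul_nonneg (coeff_pos hS n).le (show (0:ℝ) ≤ t - D.q n by linarith)]
    · have hc2 : t < D.c (n + 2) := h2.trans (q_lt_c_succ hS (n + 1))
      rw [X₂_piece hS hc hc2]
      linarith [d_left D (n + 1) t,
        mul_pos (coeff_pos hS (n + 1)) (show (0:ℝ) < D.q (n + 1) - t by linarith)]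

lemma X₁_touch {t : ℝ} (h0 : 0 ≤ t) (heq : D.X₁ t = D.X₂ t) : ∃ n, D.q n = t := by
  rcases lt_or_ge t (D.q 0) with h | h
  · exfalso
    rw [X₁_pre h] at heq
    rcases lt_or_ge t (D.c 0) with hc | hc
    · rw [X₂_pre hc] at heq
      linarith [d_pre D t, mul_pos (coeffp_pos hS) (inner_pre_pos hS h0)]
    · have h2 : t < D.c 1 := h.trans (q_lt_c_succ hS 0)
      rw [X₂_piece hS hc h2] at heq
      linarith [d_left D 0 t,
        mul_pos (coeff_pos hS 0) (show (0:ℝ) < D.q 0 - t by linarith)]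
  · have h1 : D.q (D.jdx t) ≤ t := q_jdx_le hS h
    have h2 : t < D.q (D.jdx t + 1) := lt_q_jdx_succ hS t
    set n := D.jdx t
    rw [X₁_piece hS h1 h2] at heq
    rcases lt_or_ge t (D.c (n + 1)) with hc | hc
    · have hcn : D.c n ≤ t := (c_lt_q hS n).le.trans h1
      rw [X₂_piece hS hcn hc] at heq
      refine ⟨n, ?_⟩
      rcases eq_or_lt_of_le h1 with he | hlt
      · exact he
      · exfalso
        linarith [d_right D n t,
          mul_pos (coeff_pos hS n) (show (0:ℝ) < t - D.q n by linarith)]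
    · exfalso
      have hc2 : t < D.c (n + 2) := h2.trans (q_lt_c_succ hS (n + 1))
      rw [X₂_piece hS hc hc2] at heq
      linarith [d_left D (n + 1) t,
        mul_pos (coeff_pos hS (n + 1)) (show (0:ℝ) < D.q (n + 1) - t by linarith)]

end DSign

end Dat
end BB


/-- A motion of the restricted bouncing-ball system, case (1): the positive-mass
ball `P₂` (position `x₂`, velocity `v₂`) moves between the oscillating plate
`f` and the zero-mass ball `P₁` (position `x₁`, velocity `v₁`) above it, in
constant gravity `g`.  `P₂` bounces on the plate unaffected by `P₁` (plate
collision times `coll₂`, reflection `v₂⁺ = −v₂⁻ + 2 f'(t)`), while `P₁`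
free-falls and reflects off `P₂` by `v₁⁺ = −v₁⁻ + 2 v₂(t)` at the ball–ball
collision times `q n`, which increase to infinity. -/
structure RestrictedMotionCase1 (g : ℝ) (f : ℝ → ℝ) where
  x₁ : ℝ → ℝ
  x₂ : ℝ → ℝ
  v₁ : ℝ → ℝ
  v₂ : ℝ → ℝ
  coll₂ : Set ℝ
  q : ℕ → ℝ
  cont₁ : ContinuousOn x₁ (Set.Ici 0)
  cont₂ : ContinuousOn x₂ (Set.Ici 0)
  order : ∀ t ∈ Set.Ici (0 : ℝ), f t ≤ x₂ t ∧ x₂ t ≤ x₁ t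
  coll₂_sub : coll₂ ⊆ Set.Ici 0
  coll₂_discrete : ∀ t : ℝ, ∃ ε > (0 : ℝ), ∀ s ∈ coll₂, |s - t| < ε → s = t
  freefall₂ : ∀ t ∈ Set.Ici (0 : ℝ) \ coll₂,
    HasDerivAt x₂ (v₂ t) t ∧ HasDerivAt v₂ (-g) t
  contact₂_mem : ∀ t ∈ Set.Ici (0 : ℝ), x₂ t = f t → t ∈ coll₂
  coll₂_contact : ∀ t ∈ coll₂, x₂ t = f t
  plate_law : ∀ t ∈ coll₂, 0 < t →
    ∃ a b : ℝ, Tendsto v₂ (𝓝[<] t) (𝓝 a) ∧ Tendsto v₂ (𝓝[>] t) (𝓝 b) ∧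
      b = -a + 2 * deriv f t
  q_strictMono : StrictMono q
  q_nonneg : ∀ n : ℕ, 0 ≤ q n
  q_tendsto : Tendsto q atTop atTop
  q_contact : ∀ n : ℕ, x₁ (q n) = x₂ (q n)
  contact₁_mem : ∀ t ∈ Set.Ici (0 : ℝ), x₁ t = x₂ t → ∃ n : ℕ, q n = t
  freefall₁ : ∀ t ∈ Set.Ici (0 : ℝ), (∀ n : ℕ, q n ≠ t) →
    HasDerivAt x₁ (v₁ t) t ∧ HasDerivAt v₁ (-g) t
  ball_law : ∀ n : ℕ, ∃ a : ℝ, Tendsto v₁ (𝓝[<] (q n)) (𝓝 a) ∧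
    Tendsto v₁ (𝓝[>] (q n)) (𝓝 (-a + 2 * v₂ (q n)))

set_option maxHeartbeats 2000000 in
/-- Theorem 3,3 (second part): in case (1) of the restricted system, if `f`
belongs to the class `𝒞` (there are `t₀` and a positive integer `K` with
`f'(t₀) = K·T·g/2`) then there are initial conditions for which both balls
have unbounded velocity. -/
theorem restricted_case1_both_unbounded
    (g T : ℝ) (hg : 0 < g) (hT : 0 < T)
    (f : ℝ → ℝ) (hf : ContDiff ℝ 1 f) (hfper : Function.Periodic f T)
    (hclass : ∃ t₀ : ℝ, ∃ K : ℕ, 0 < K ∧ deriv f t₀ = K * T * g / 2) :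
    ∃ M : RestrictedMotionCase1 g f,
      (¬ ∃ C : ℝ, ∀ t ∈ Set.Ici (0 : ℝ), |M.v₁ t| ≤ C) ∧
      (¬ ∃ C : ℝ, ∀ t ∈ Set.Ici (0 : ℝ), |M.v₂ t| ≤ C) := by
  classical
  obtain ⟨t₀, K, hK, hdK⟩ := hclass
  have hKR : (0:ℝ) < K := by exact_mod_cast hK
  set P : ℝ := (K : ℝ) * T with hPdef
  have hP : 0 < P := mul_pos hKR hT
  have hgP : 0 < g * P := mul_pos hg hP
  have hfP : Function.Periodic f P := hfper.nat_mul K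
  have hdiff : Differentiable ℝ f := hf.differentiable one_ne_zero
  have hdper : Function.Periodic (deriv f) P := by
    intro x
    have hfun : (fun y => f (y + P)) = f := funext fun y => hfP y
    calc deriv f (x + P) = deriv (fun y => f (y + P)) x := (deriv_comp_add_const f P x).symm
      _ = deriv f x := by rw [hfun]
  have hcont : Continuous (deriv f) := hf.continuous_deriv le_rfl
  obtain ⟨L0, hL0b⟩ := (isCompact_Icc :
    IsCompact (Set.Icc (0:ℝ) P)).exists_bound_of_continuousOn hcont.continuousOn
  set L : ℝ := max L0 0 with hLdef
  have hL0 : 0 ≤ L := le_max_right _ _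
  have hbound : ∀ x : ℝ, ‖deriv f x‖ ≤ L := by
    intro x
    have h1 : (0:ℝ) ≤ Int.fract (x / P) := Int.fract_nonneg _
    have h2 : Int.fract (x / P) < 1 := Int.fract_lt_one _
    have hff : ((⌊x / P⌋ : ℝ)) + Int.fract (x / P) = x / P := Int.floor_add_fract _
    have hmem : x - (⌊x / P⌋ : ℝ) * P ∈ Set.Icc (0:ℝ) P := by
      have hval : x - (⌊x / P⌋ : ℝ) * P = P * Int.fract (x / P) := by
        have : (⌊x / P⌋ : ℝ) = x / P - Int.fract (x / P) := by linarith
        rw [this]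
        field_simp
        ring
      constructor
      · rw [hval]; positivity
      · rw [hval]
        nlinarith [mul_lt_mul_of_pos_left h2 hP]
    calc ‖deriv f x‖ = ‖deriv f (x - (⌊x / P⌋ : ℝ) * P)‖ := by
          rw [hdper.sub_int_mul_eq]
      _ ≤ L0 := hL0b _ hmem
      _ ≤ L := le_max_left _ _
  have hLip : ∀ x y : ℝ, |f x - f y| ≤ L * |x - y| := by
    intro x y
    have := Convex.norm_image_sub_le_of_norm_hasDerivWithin_le
      (f := f) (f' := deriv f) (s := Set.univ)
      (fun z _ => (hdiff z).hasDerivAt.hasDerivWithinAt)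
      (fun z _ => hbound z) convex_univ (Set.mem_univ y) (Set.mem_univ x)
    simpa [Real.norm_eq_abs] using this
  set γ : ℝ := P * Int.fract (t₀ / P) + P with hγdef
  have hfr1 : (0:ℝ) ≤ Int.fract (t₀ / P) := Int.fract_nonneg _
  have hfr2 : Int.fract (t₀ / P) < 1 := Int.fract_lt_one _
  have hγ1 : P ≤ γ := by rw [hγdef]; nlinarith [mul_nonneg hP.le hfr1]
  have hγ2 : γ < 2 * P := by rw [hγdef]; nlinarith [mul_lt_mul_of_pos_left hfr2 hP]
  have hγeq : γ = (t₀ + P) - (⌊t₀ / P⌋ : ℝ) * P := by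
    have hff : ((⌊t₀ / P⌋ : ℝ)) + Int.fract (t₀ / P) = t₀ / P := Int.floor_add_fract _
    have h2 : P * Int.fract (t₀ / P) = t₀ - (⌊t₀ / P⌋ : ℝ) * P := by
      have hh : Int.fract (t₀ / P) = t₀ / P - (⌊t₀ / P⌋ : ℝ) := by linarith
      rw [hh]
      field_simp
    rw [hγdef, h2]
    ring
  have hfγ : f γ = f t₀ := by
    rw [hγeq, hfP.sub_int_mul_eq]
    exact hfP t₀
  have hdγ : deriv f γ = g * P / 2 := by
    rw [hγeq, hdper.sub_int_mul_eq]
    have : deriv f (t₀ + P) = deriv f t₀ := hdper t₀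
    rw [this, hdK, hPdef]
    ring
  obtain ⟨N, hNgt⟩ := exists_nat_gt (4 * L / (g * P) + 4)
  have hN4R : (4:ℝ) ≤ (N:ℝ) := by
    have h0 : 0 ≤ 4 * L / (g * P) := by positivity
    linarith
  have hN4 : 4 ≤ N := by exact_mod_cast hN4R
  have h4L : 4 * L < ((N:ℝ) - 4) * (g * P) := by
    rw [← div_lt_iff₀ hgP]
    calc 4 * L / (g * P) < (N:ℝ) - 4 := by linarith
      _ ≤ _ := le_rfl
  set D : BB.Dat := ⟨g, P, γ, f γ, N⟩ with hD
  have hLN : L < D.g * D.P * (2 * (D.N : ℝ) - 3) / 4 := by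
    simp only [hD]
    nlinarith [mul_nonneg hgP.le (show (0:ℝ) ≤ (N:ℝ) + 1 by positivity)]
  have hS : D.Sane := ⟨hg, hP, hγ1, hγ2, hN4⟩
  have hcn : ∀ n : ℕ, D.c n = γ + ((n * (n + 2 * N) : ℕ) : ℝ) * P := by
    intro n
    simp only [BB.Dat.c, hD]
    push_cast
    ring
  have hfc : ∀ n : ℕ, f (D.c n) = D.f₀ := by
    intro n
    rw [hcn n]
    exact (hfP.nat_mul _) γ
  have hfdn : ∀ n : ℕ, deriv f (D.c n) = D.g * D.P / 2 := by
    intro n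
    rw [hcn n]
    have : deriv f (γ + ((n * (n + 2 * N) : ℕ) : ℝ) * P) = deriv f γ := (hdper.nat_mul _) γ
    rw [this, hdγ]
  have hDg : D.g = g := rfl
  clear_value D γ L P
  refine ⟨{
    x₁ := D.X₁
    x₂ := D.X₂
    v₁ := D.V₁
    v₂ := D.V₂
    coll₂ := Set.range D.c
    q := D.q
    cont₁ := fun t _ => (BB.Dat.X₁_continuousAt hS t).continuousWithinAt
    cont₂ := fun t _ => (BB.Dat.X₂_continuousAt hS t).continuousWithinAt
    order := fun t ht => ⟨BB.Dat.f_le_X₂ hS f L hL0 hLip hLN hfc ht,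
      BB.Dat.X₂_le_X₁ hS ht⟩
    coll₂_sub := by
      rintro s ⟨n, rfl⟩
      exact (BB.Dat.c_pos hS n).le
    coll₂_discrete := BB.Dat.discrete hS
    freefall₂ := fun t ht => hDg ▸ BB.Dat.freefall₂ hS ht.2
    contact₂_mem := fun t ht heq => BB.Dat.X₂_touch hS f L hL0 hLip hLN hfc ht heq
    coll₂_contact := by
      rintro s ⟨n, rfl⟩
      rw [BB.Dat.X₂_at_c hS, hfc n]
    plate_law := by
      rintro s ⟨n, rfl⟩ -
      cases n with
      | zero =>
        exact ⟨_, _, BB.Dat.V₂_left_zero, BB.Dat.V₂_right hS 0, by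
          rw [hfdn 0]
          exact BB.Dat.plate_id_zero D⟩
      | succ m =>
        exact ⟨_, _, BB.Dat.V₂_left_succ hS m, BB.Dat.V₂_right hS (m + 1), by
          rw [hfdn (m + 1)]
          exact BB.Dat.plate_id_succ D m⟩
    q_strictMono := BB.Dat.q_mono hS
    q_nonneg := fun n => (BB.Dat.q_pos hS n).le
    q_tendsto := BB.Dat.q_tendsto hS
    q_contact := by
      intro n
      rw [BB.Dat.X₁_piece hS le_rfl (BB.Dat.q_mono hS (Nat.lt_succ_self n)),
        BB.Dat.X₂_piece hS (BB.Dat.c_lt_q hS n).le (BB.Dat.q_lt_c_succ hS n)]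
      have hdd := BB.Dat.d_right D n (D.q n)
      simp only [sub_self, mul_zero] at hdd
      linarith
    contact₁_mem := fun t ht heq => BB.Dat.X₁_touch hS ht heq
    freefall₁ := fun t _ hne => hDg ▸ BB.Dat.freefall₁ hS hne
    ball_law := by
      intro n
      refine ⟨-D.g * (D.q n - D.c n), BB.Dat.V₁_left hS n, ?_⟩
      have hv2 : D.V₂ (D.q n) = D.w (D.c n) (D.c (n + 1)) (D.q n) :=
        BB.Dat.V₂_piece hS (BB.Dat.c_lt_q hS n).le (BB.Dat.q_lt_c_succ hS n)
      rw [hv2, ← BB.Dat.ball_id D n]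
      exact BB.Dat.V₁_right hS n
  }, ?_, ?_⟩
  · rintro ⟨C, hC⟩
    obtain ⟨n, hn⟩ := exists_nat_gt (C / (g * P))
    have hCn : C < (n:ℝ) * (g * P) := (div_lt_iff₀ hgP).mp hn
    have hv := BB.Dat.V₁_at_q hS n
    have hval : (n:ℝ) * (g * P) ≤ D.g * (((D.N : ℝ) + n) + 3 / 2) * D.P := by
      simp only [hD]
      nlinarith [mul_nonneg hgP.le (Nat.cast_nonneg (α := ℝ) N)]
    have hle : |D.V₁ (D.q n)| ≤ C := hC (D.q n) (Set.mem_Ici.mpr (BB.Dat.q_pos hS n).le)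
    rw [hv] at hle
    have habs := le_abs_self (D.g * (((D.N : ℝ) + n) + 3 / 2) * D.P)
    linarith
  · rintro ⟨C, hC⟩
    obtain ⟨n, hn⟩ := exists_nat_gt (C / (g * P))
    have hCn : C < (n:ℝ) * (g * P) := (div_lt_iff₀ hgP).mp hn
    have hv := BB.Dat.V₂_at_c hS n
    have hval : (n:ℝ) * (g * P) ≤ D.g * (2 * ((D.N : ℝ) + n) + 1) * D.P / 2 := by
      simp only [hD]
      nlinarith [mul_nonneg hgP.le (Nat.cast_nonneg (α := ℝ) N),
        mul_nonneg hgP.le (Nat.cast_nonneg (α := ℝ) n)]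
    have hle : |D.V₂ (D.c n)| ≤ C := hC (D.c n) (Set.mem_Ici.mpr (BB.Dat.c_pos hS n).le)
    rw [hv] at hle
    have habs := le_abs_self (D.g * (2 * ((D.N : ℝ) + n) + 1) * D.P / 2)
    linarith
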